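/- Let l ≥ 1, let c be a symmetric positive definite real l×l matrix, and let h be a nonzero real number. Encode an element g of ℝ[t₁,…,t_l][[e^{t₁},…,e^{t_l}]] as a function from multi-indices d : (Fin l →₀ ℕ) to polynomials g_d ∈ MvPolynomial (Fin l) ℝ. Suppose g₀ = 0 and that g is annihilated by the operator H = h²·Σ_{i,j} c_{ij} ∂²/∂t_i∂t_j − Σ_j c_{jj} e^{t_j}, i.e., for every multi-index d: h²·Σ_{i,j} c_{ij}·(pderiv i + (d i))((pderiv j + (d j)) g_d) − Σ_j c_{jj}·g_{d−e_j} = 0, where e_j is the j-th standard multi-index and g_{d−e_j} is interpreted as 0 when d j = 0. Then g = 0. -/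

import Mathlib

open MvPolynomial Finsupp

lemma coeff_pderiv' {l : ℕ} (i : Fin l) (m : Fin l →₀ ℕ) (p : MvPolynomial (Fin l) ℝ) :
    MvPolynomial.coeff m (MvPolynomial.pderiv i p)
      = (m i + 1) * MvPolynomial.coeff (m + Finsupp.single i 1) p := by
  induction p using MvPolynomial.induction_on' with
  | add p q hp hq => simp [hp, hq]; ring
  | monomial s a =>
    rw [pderiv_monomial, coeff_monomial, coeff_monomial]
    by_cases h : s = m + Finsupp.single i 1
    · subst h
      have h1 : m + Finsupp.single i 1 - Finsupp.single i 1 = m := by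
        ext k; simp [Finsupp.tsub_apply]
      have h3 : (m + Finsupp.single i 1 : Fin l →₀ ℕ) i = m i + 1 := by
        rw [Finsupp.add_apply, Finsupp.single_apply]; simp
      rw [h1, h3, if_pos rfl, if_pos rfl]; push_cast; ring
    · rw [if_neg h]
      by_cases h2 : s - Finsupp.single i 1 = m
      · rw [if_pos h2]
        have hsi : s i = 0 := by
          by_contra hsi
          apply h
          ext k
          by_cases hk : k = i
          · subst hk
            have := Finsupp.ext_iff.mp h2 k
            simp [Finsupp.tsub_apply] at this ⊢
            omega
          · have := Finsupp.ext_iff.mp h2 k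
            simp [Finsupp.tsub_apply, Finsupp.single_apply, Ne.symm hk] at this ⊢
            omega
        simp [hsi]
      · rw [if_neg h2]; ring

lemma deg_add_single {l : ℕ} (m : Fin l →₀ ℕ) (i : Fin l) :
    (∑ k, (m + Finsupp.single i 1 : Fin l →₀ ℕ) k) = (∑ k, m k) + 1 := by
  simp only [Finsupp.add_apply, Finset.sum_add_distrib]
  congr 1
  simp [Finsupp.single_apply]

lemma key_inj {l : ℕ} (c : Matrix (Fin l) (Fin l) ℝ) (hpos : c.PosDef)
    (d : Fin l →₀ ℕ) (hd : d ≠ 0) (p : MvPolynomial (Fin l) ℝ)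
    (hp : (∑ i, ∑ j, c i j •
        (MvPolynomial.pderiv i (MvPolynomial.pderiv j p + (d j) • p)
          + (d i) • (MvPolynomial.pderiv j p + (d j) • p))) = 0) :
    p = 0 := by
  by_contra hp0
  -- choose a monomial of maximal total degree
  obtain ⟨m, hm, hmax⟩ := Finset.exists_max_image p.support (fun m => ∑ k, m k)
    (MvPolynomial.support_nonempty.mpr hp0)
  -- coefficients above degree of m vanish
  have hvan : ∀ m' : Fin l →₀ ℕ, (∑ k, m k) < (∑ k, m' k) → MvPolynomial.coeff m' p = 0 := by
    intro m' hm'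
    by_contra hc
    exact absurd (hmax m' (MvPolynomial.mem_support_iff.mpr hc)) (not_le.mpr hm')
  have hv1 : ∀ i, MvPolynomial.coeff m (MvPolynomial.pderiv i p) = 0 := by
    intro i
    rw [coeff_pderiv', hvan _ (by rw [deg_add_single]; omega)]
    ring
  have hv2 : ∀ i j, MvPolynomial.coeff m (MvPolynomial.pderiv i (MvPolynomial.pderiv j p)) = 0 := by
    intro i j
    rw [coeff_pderiv', coeff_pderiv', hvan _ (by rw [deg_add_single, deg_add_single]; omega)]
    ring
  -- compute the coefficient of m in the equation
  have hco := congrArg (MvPolynomial.coeff m) hp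
  rw [MvPolynomial.coeff_sum] at hco
  simp only [MvPolynomial.coeff_sum, MvPolynomial.coeff_smul, map_add, coeff_pderiv',
    MvPolynomial.coeff_zero] at hco
  have hco2 : (∑ i, ∑ j, c i j * ((d i : ℝ) * (d j : ℝ))) * MvPolynomial.coeff m p = 0 := by
    rw [← hco, Finset.sum_mul]
    refine Finset.sum_congr rfl fun i _ => ?_
    rw [Finset.sum_mul]
    refine Finset.sum_congr rfl fun j _ => ?_
    have z1 : MvPolynomial.coeff (m + Finsupp.single i 1) p = 0 :=
      hvan _ (by rw [deg_add_single]; omega)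
    have z2 : MvPolynomial.coeff (m + Finsupp.single i 1 + Finsupp.single j 1) p = 0 :=
      hvan _ (by rw [deg_add_single, deg_add_single]; omega)
    have z3 : MvPolynomial.coeff (m + Finsupp.single j 1) p = 0 :=
      hvan _ (by rw [deg_add_single]; omega)
    have csmul : ∀ (k : ℕ) (q : MvPolynomial (Fin l) ℝ) (m' : Fin l →₀ ℕ),
        MvPolynomial.coeff m' (k • q) = (k : ℝ) * MvPolynomial.coeff m' q := fun k q m' => by
      rw [MvPolynomial.coeff_smul]; simp [nsmul_eq_mul]
    simp only [MvPolynomial.coeff_add, csmul, coeff_pderiv', smul_eq_mul, z1, z2, z3]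
    ring
  -- positivity
  have hx : (fun i => (d i : ℝ)) ≠ 0 := by
    obtain ⟨i, hi⟩ : ∃ i, d i ≠ 0 := by
      by_contra hcon
      push_neg at hcon
      exact hd (Finsupp.ext fun i => hcon i)
    intro hcon
    exact hi (by have := congrFun hcon i; simpa using this)
  have hppos := hpos.dotProduct_mulVec_pos (x := fun i => (d i : ℝ)) hx
  have heq : dotProduct (star fun i => ((d i : ℕ) : ℝ)) (c.mulVec fun i => ((d i : ℕ) : ℝ))
      = ∑ i, ∑ j, c i j * ((d i : ℝ) * (d j : ℝ)) := by
    simp only [dotProduct, Matrix.mulVec, Pi.star_apply, star_trivial, Finset.mul_sum]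
    exact Finset.sum_congr rfl fun i _ => Finset.sum_congr rfl fun j _ => by ring
  rw [heq] at hppos
  have := mul_eq_zero.mp hco2
  rcases this with h1 | h2
  · exact absurd h1 (ne_of_gt hppos)
  · exact (MvPolynomial.mem_support_iff.mp hm) h2

/-- Kim's lemma (Lemma 4.6): if `g ∈ ℝ[t₁,…,t_l][[e^{t₁},…,e^{t_l}]]` has
`g₀ = 0` and is annihilated by
`H = h²·Σ_{i,j} c_{ij} ∂²/∂t_i∂t_j − Σ_j c_{jj} e^{t_j}` with `c` symmetric
positive definite and `h ≠ 0`, then `g = 0`. -/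
theorem stmt_6 (l : ℕ) (hl : 1 ≤ l) (c : Matrix (Fin l) (Fin l) ℝ)
    (hsymm : c.IsSymm) (hpos : c.PosDef) (h : ℝ) (hh : h ≠ 0)
    (g : (Fin l →₀ ℕ) → MvPolynomial (Fin l) ℝ)
    (hg0 : g 0 = 0)
    (hH : ∀ d : Fin l →₀ ℕ,
      h ^ 2 • (∑ i, ∑ j, c i j •
        (MvPolynomial.pderiv i (MvPolynomial.pderiv j (g d) + (d j) • g d)
          + (d i) • (MvPolynomial.pderiv j (g d) + (d j) • g d)))
      - ∑ j, c j j • (if d j = 0 then 0 else g (d - Finsupp.single j 1)) = 0) :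
    g = 0 := by
  have main : ∀ n : ℕ, ∀ d : Fin l →₀ ℕ, (∑ i, d i) = n → g d = 0 := by
    intro n
    induction n using Nat.strong_induction_on with
    | _ n ih =>
      intro d hdn
      by_cases hd : d = 0
      · subst hd; exact hg0
      · have hn : 0 < n := by
          rcases Nat.eq_zero_or_pos n with h0 | h0
          · exfalso
            apply hd
            ext i
            have : d i ≤ ∑ k, d k := Finset.single_le_sum (fun k _ => Nat.zero_le _)
              (Finset.mem_univ i)
            simp only [Finsupp.coe_zero, Pi.zero_apply]
            omega
          · exact h0
        -- lower order terms vanish by induction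
        have hlow : (∑ j, c j j • (if d j = 0 then 0 else g (d - Finsupp.single j 1)))
            = 0 := by
          refine Finset.sum_eq_zero fun j _ => ?_
          by_cases hj : d j = 0
          · simp [hj]
          · rw [if_neg hj]
            have hsum : (∑ i, (d - Finsupp.single j 1 : Fin l →₀ ℕ) i) = n - 1 := by
              have : (∑ i, ((d - Finsupp.single j 1 : Fin l →₀ ℕ) i
                  + (Finsupp.single j 1 : Fin l →₀ ℕ) i)) = ∑ i, d i := by
                refine Finset.sum_congr rfl fun i _ => ?_
                rw [Finsupp.tsub_apply]
                have : (Finsupp.single j 1 : Fin l →₀ ℕ) i ≤ d i := by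
                  rw [Finsupp.single_apply]
                  split_ifs with hij
                  · subst hij; omega
                  · omega
                omega
              rw [Finset.sum_add_distrib] at this
              have h1 : (∑ i, (Finsupp.single j 1 : Fin l →₀ ℕ) i) = 1 := by
                simp [Finsupp.single_apply]
              omega
            rw [ih (n - 1) (by omega) _ hsum, smul_zero]
        have hHd := hH d
        rw [hlow, sub_zero] at hHd
        have h2 : (∑ i, ∑ j, c i j •
            (MvPolynomial.pderiv i (MvPolynomial.pderiv j (g d) + (d j) • g d)
              + (d i) • (MvPolynomial.pderiv j (g d) + (d j) • g d))) = 0 := by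
          have := congrArg (fun q => (h ^ 2)⁻¹ • q) hHd
          simpa [smul_smul, inv_mul_cancel₀ (pow_ne_zero 2 hh)] using this
        exact key_inj c hpos d hd (g d) h2
  funext d
  exact main (∑ i, d i) d rfl
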